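/- arXiv:2106.13851 — 5 statements merged into one kernel-verified Lean document; each statement's English description precedes it below -/
import Mathlib

section
/- Let r ≥ 1 and n > 0 be real numbers, and let a : ℕ → ℝ be a sequence with 0 ≤ a(i) for all i, a(0) ≤ n, and such that for every i ∈ ℕ, a(i+1) ≤ a(i) / (r · max(a(i) · r^(2i+1) / n, 1)). Then for every i ∈ ℕ, a(i) ≤ n / r^(2i). -/
/-- Lemma 3.1 core: the sample size attached to a level-`i` cell of the
SampleCut construction decays as `n / r^(2i)`. -/
theorem sampleCut_cell_size_bound (r n : ℝ) (hr : 1 ≤ r) (hn : 0 < n)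
    (a : ℕ → ℝ) (ha_nonneg : ∀ i, 0 ≤ a i) (ha0 : a 0 ≤ n)
    (hrec : ∀ i : ℕ, a (i + 1) ≤ a i / (r * max (a i * r ^ (2 * i + 1) / n) 1)) :
    ∀ i : ℕ, a i ≤ n / r ^ (2 * i) := by
  have hr0 : (0:ℝ) < r := lt_of_lt_of_le one_pos hr
  intro i
  induction i with
  | zero => simpa using ha0
  | succ i ih =>
    have hrp : (0:ℝ) < r ^ (2 * i + 1) := pow_pos hr0 _
    rcases le_or_gt 1 (a i * r ^ (2 * i + 1) / n) with h | h
    · have hmax : max (a i * r ^ (2 * i + 1) / n) 1 = a i * r ^ (2 * i + 1) / n :=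
        max_eq_left h
      have hai : 0 < a i := by
        by_contra hcon
        push_neg at hcon
        have : a i = 0 := le_antisymm hcon (ha_nonneg i)
        rw [this] at h
        simp at h
        linarith
      have := hrec i
      rw [hmax] at this
      calc a (i + 1) ≤ a i / (r * (a i * r ^ (2 * i + 1) / n)) := this
        _ = n / r ^ (2 * (i + 1)) := by
            rw [mul_add, mul_one, pow_add]
            field_simp
            ring
    · have hmax : max (a i * r ^ (2 * i + 1) / n) 1 = 1 := max_eq_right h.le
      have hai : a i < n / r ^ (2 * i + 1) := by
        rw [div_lt_one hn] at h
        exact (lt_div_iff₀ hrp).mpr h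
      have := hrec i
      rw [hmax, mul_one] at this
      calc a (i + 1) ≤ a i / r := this
        _ ≤ (n / r ^ (2 * i + 1)) / r := by
            gcongr
        _ = n / r ^ (2 * (i + 1)) := by
            rw [div_div, ← pow_succ]
            ring_nf
end

section
/- Let s, m, d be natural numbers with s ≥ 1 and d ≤ m, and let D be a subset of Fin s with |D| = d. Then the number of functions f : Fin m → Fin s whose image contains D (i.e., for every x ∈ D there exists t with f(t) = x) is at most m^d · s^(m−d). Equivalently, for a uniformly random function f : Fin m → Fin s, the probability that every element of D occurs as a value of f is at most (m/s)^d. -/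
/-- Lemma 3.2 core: the number of functions `f : Fin m → Fin s` whose image
contains a fixed set `D` of `d` elements is at most `m^d * s^(m-d)`, i.e. a
uniformly random sample of size `m` with replacement contains all `d` fixed
elements with probability at most `(m/s)^d`. -/
theorem count_functions_covering_set (s m d : ℕ) (hs : 1 ≤ s) (hd : d ≤ m)
    (D : Finset (Fin s)) (hD : D.card = d) :
    (Finset.univ.filter
        (fun f : Fin m → Fin s => ∀ x ∈ D, ∃ t : Fin m, f t = x)).card ≤
      m ^ d * s ^ (m - d) := by
  classical
  set W : Finset ({x // x ∈ D} → Fin m) :=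
    Finset.univ.filter Function.Injective with hW
  have hsub : (Finset.univ.filter
      (fun f : Fin m → Fin s => ∀ x ∈ D, ∃ t : Fin m, f t = x)) ⊆
      W.biUnion (fun w => Finset.univ.filter
        (fun f : Fin m → Fin s =>
          ∀ x : {x // x ∈ D}, f (w x) = (x : Fin s))) := by
    intro f hf
    simp only [Finset.mem_filter, Finset.mem_univ, true_and] at hf
    have hch : ∀ x : {x // x ∈ D}, ∃ t, f t = (x : Fin s) := fun x => hf x x.2
    choose w hw using hch
    have hwinj : Function.Injective w := by
      intro a b hab
      apply Subtype.ext
      rw [← hw a, ← hw b, hab]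
    refine Finset.mem_biUnion.2 ⟨w, ?_, ?_⟩
    · simp [hW, hwinj]
    · simp [hw]
  refine le_trans (Finset.card_le_card hsub) ?_
  refine le_trans Finset.card_biUnion_le ?_
  have hbound : ∀ w ∈ W,
      (Finset.univ.filter
        (fun f : Fin m → Fin s =>
          ∀ x : {x // x ∈ D}, f (w x) = (x : Fin s))).card ≤ s ^ (m - d) := by
    intro w hw
    have hwinj : Function.Injective w := by
      simpa [hW] using hw
    set R : Finset (Fin m) := Finset.univ.image w with hR
    have hRcard : R.card = d := by
      rw [hR, Finset.card_image_of_injective _ hwinj, Finset.card_univ,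
        Fintype.card_coe, hD]
    have hcompl : (Rᶜ : Finset (Fin m)).card = m - d := by
      rw [Finset.card_compl, hRcard, Fintype.card_fin]
    have hinj : Set.InjOn
        (fun (f : Fin m → Fin s) =>
          fun t : {t // t ∈ (Rᶜ : Finset (Fin m))} => f (t : Fin m))
        ↑(Finset.univ.filter
          (fun f : Fin m → Fin s =>
            ∀ x : {x // x ∈ D}, f (w x) = (x : Fin s))) := by
      intro f hf g hg hfg
      simp only [Finset.coe_filter, Set.mem_setOf_eq] at hf hg
      funext t
      by_cases ht : t ∈ R
      · obtain ⟨x, -, rfl⟩ := Finset.mem_image.1 ht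
        rw [hf.2 x, hg.2 x]
      · exact congrFun hfg ⟨t, Finset.mem_compl.2 ht⟩
    have hle := Finset.card_le_card_of_injOn
      (f := fun (f : Fin m → Fin s) =>
        fun t : {t // t ∈ (Rᶜ : Finset (Fin m))} => f (t : Fin m))
      (t := (Finset.univ : Finset ({t // t ∈ (Rᶜ : Finset (Fin m))} → Fin s)))
      (fun f _ => Finset.mem_univ _) hinj
    calc _ ≤ _ := hle
      _ = s ^ (m - d) := by
        rw [Finset.card_univ, Fintype.card_fun, Fintype.card_fin,
          Fintype.card_coe, hcompl]
  calc ∑ w ∈ W, (Finset.univ.filter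
        (fun f : Fin m → Fin s =>
          ∀ x : {x // x ∈ D}, f (w x) = (x : Fin s))).card
      ≤ ∑ _w ∈ W, s ^ (m - d) := Finset.sum_le_sum hbound
    _ = W.card * s ^ (m - d) := by rw [Finset.sum_const, smul_eq_mul]
    _ ≤ m ^ d * s ^ (m - d) := by
        apply Nat.mul_le_mul_right
        calc W.card ≤ (Finset.univ : Finset ({x // x ∈ D} → Fin m)).card :=
              Finset.card_filter_le _ _
          _ = m ^ d := by
              rw [Finset.card_univ, Fintype.card_fun, Fintype.card_fin,
                Fintype.card_coe, hD]
end

section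
/- Let n ≥ 1 be an integer and let i, i', j, j', k, k' be integers with 1 ≤ i, i', j, j', k, k' ≤ n and i ≠ i'. Then −j + 3n·k + 5n²·(i' − i) ≠ −j' + 3n·k'. Equivalently, the intersection point of the horizontal line y = y_{i,j} = −j − 5n²·i with the slope-one line y = x + o_{i',k}, where o_{i',k} = −3n·k − 5n²·i', has x-coordinate y_{i,j} − o_{i',k} = −j + 3n·k + 5n²·(i' − i), and this never equals the x-coordinate x_{j',k'} = −j' + 3n·k' of any black vertical line. -/
/-- Section 4.2 no-spurious-intersections: a blue horizontal line from bundle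
`i`, a red slope-one line from bundle `i' ≠ i`, and a black vertical line are
never concurrent. -/
theorem no_spurious_triple_intersection (n i i' j j' k k' : ℤ) (hn : 1 ≤ n)
    (hi₁ : 1 ≤ i) (hi₂ : i ≤ n) (hi'₁ : 1 ≤ i') (hi'₂ : i' ≤ n)
    (hj₁ : 1 ≤ j) (hj₂ : j ≤ n) (hj'₁ : 1 ≤ j') (hj'₂ : j' ≤ n)
    (hk₁ : 1 ≤ k) (hk₂ : k ≤ n) (hk'₁ : 1 ≤ k') (hk'₂ : k' ≤ n)
    (hii' : i ≠ i') :
    -j + 3 * n * k + 5 * n ^ 2 * (i' - i) ≠ -j' + 3 * n * k' := by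
  intro h
  rcases lt_or_gt_of_ne hii' with hlt | hgt
  · have h1 : i + 1 ≤ i' := hlt
    nlinarith [sq_nonneg n, mul_le_mul_of_nonneg_left hk₂ (by linarith : (0:ℤ) ≤ 3*n)]
  · have h1 : i' + 1 ≤ i := hgt
    nlinarith [sq_nonneg n, mul_le_mul_of_nonneg_left hk'₂ (by linarith : (0:ℤ) ≤ 3*n)]
end

section
/- Let n ≥ 1 be an integer and let i, i', j, j', k, k' be integers with 1 ≤ i, i', j, j', k, k' ≤ n. Define y_{i,j} = −j − 5n²·i, o_{i',k} = −3n·k − 5n²·i', and x_{j',k'} = −j' + 3n·k'. Then the three lines y = y_{i,j} (horizontal), y = x + o_{i',k} (slope one), and x = x_{j',k'} (vertical) have a common point if and only if i = i', j = j', and k = k'. -/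
lemma key_int (n i i' j j' k k' : ℤ) (hn : 1 ≤ n)
    (hi₁ : 1 ≤ i) (hi₂ : i ≤ n) (hi'₁ : 1 ≤ i') (hi'₂ : i' ≤ n)
    (hj₁ : 1 ≤ j) (hj₂ : j ≤ n) (hj'₁ : 1 ≤ j') (hj'₂ : j' ≤ n)
    (hk₁ : 1 ≤ k) (hk₂ : k ≤ n) (hk'₁ : 1 ≤ k') (hk'₂ : k' ≤ n)
    (h : 5 * n ^ 2 * (i' - i) + 3 * n * (k - k') + (j' - j) = 0) :
    i = i' ∧ j = j' ∧ k = k' := by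
  have hii : i = i' := by
    rcases lt_trichotomy i i' with h1 | h1 | h1
    · exfalso; nlinarith [sq_nonneg n]
    · exact h1
    · exfalso; nlinarith [sq_nonneg n]
  subst hii
  have hkk : k = k' := by
    rcases lt_trichotomy k k' with h1 | h1 | h1
    · exfalso; nlinarith
    · exact h1
    · exfalso; nlinarith
  subst hkk
  omega

/-- Section 4.2 combined: the horizontal line `y = y_{i,j}`, the slope-one line
`y = x + o_{i',k}`, and the vertical line `x = x_{j',k'}` have a common point in
`ℝ²` iff `i = i'`, `j = j'`, and `k = k'`. -/
theorem triple_intersection_iff_clique (n i i' j j' k k' : ℤ) (hn : 1 ≤ n)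
    (hi₁ : 1 ≤ i) (hi₂ : i ≤ n) (hi'₁ : 1 ≤ i') (hi'₂ : i' ≤ n)
    (hj₁ : 1 ≤ j) (hj₂ : j ≤ n) (hj'₁ : 1 ≤ j') (hj'₂ : j' ≤ n)
    (hk₁ : 1 ≤ k) (hk₂ : k ≤ n) (hk'₁ : 1 ≤ k') (hk'₂ : k' ≤ n) :
    (∃ p : ℝ × ℝ,
        p.2 = ((-j - 5 * n ^ 2 * i : ℤ) : ℝ) ∧
        p.2 = p.1 + ((-3 * n * k - 5 * n ^ 2 * i' : ℤ) : ℝ) ∧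
        p.1 = ((-j' + 3 * n * k' : ℤ) : ℝ)) ↔
      i = i' ∧ j = j' ∧ k = k' := by
  constructor
  · rintro ⟨p, h1, h2, h3⟩
    have hr : ((-j - 5 * n ^ 2 * i : ℤ) : ℝ)
        = ((-j' + 3 * n * k' : ℤ) : ℝ) + ((-3 * n * k - 5 * n ^ 2 * i' : ℤ) : ℝ) := by
      rw [← h1, h2, h3]
    have hz : (-j - 5 * n ^ 2 * i : ℤ) = (-j' + 3 * n * k') + (-3 * n * k - 5 * n ^ 2 * i') := by
      exact_mod_cast hr
    refine key_int n i i' j j' k k' hn hi₁ hi₂ hi'₁ hi'₂ hj₁ hj₂ hj'₁ hj'₂ hk₁ hk₂ hk'₁ hk'₂ ?_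
    linarith
  · rintro ⟨rfl, rfl, rfl⟩
    refine ⟨(((-j + 3 * n * k : ℤ) : ℝ), ((-j - 5 * n ^ 2 * i : ℤ) : ℝ)), rfl, ?_, by push_cast; ring⟩
    push_cast; ring
end

section
/- Let r ≥ 1 and n > 0 be real numbers, and let a : ℕ → ℝ be a sequence with 0 ≤ a(i) for all i, a(0) ≤ n, and such that for every i ∈ ℕ, a(i+1) ≤ a(i) / (r · max(a(i) · r^(2i+1) / n, 1)). Then for every i ∈ ℕ, the quantity t(i) := max(a(i) · r^(2i+1) / n, 1) satisfies t(i) ≤ r. -/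
/-- Lemma 3.3 support: the cutting parameter `t(i) = max(a(i) r^(2i+1) / n, 1)`
of the SampleCut construction never exceeds `r`. -/
theorem cutting_parameter_le_r (r n : ℝ) (hr : 1 ≤ r) (hn : 0 < n)
    (a : ℕ → ℝ) (ha_nonneg : ∀ i, 0 ≤ a i) (ha0 : a 0 ≤ n)
    (hrec : ∀ i : ℕ, a (i + 1) ≤ a i / (r * max (a i * r ^ (2 * i + 1) / n) 1)) :
    ∀ i : ℕ, max (a i * r ^ (2 * i + 1) / n) 1 ≤ r := by
  have hr0 : (0:ℝ) < r := lt_of_lt_of_le one_pos hr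
  have key : ∀ i, a i * r ^ (2 * i) ≤ n := by
    intro i
    induction i with
    | zero => simpa using ha0
    | succ i ih =>
      have hrec' := hrec i
      have hpow : (0:ℝ) < r ^ (2 * i + 1) := pow_pos hr0 _
      rcases le_or_gt (a i * r ^ (2 * i + 1) / n) 1 with h | h
      · rw [max_eq_right h] at hrec'
        have h2 : a i * r ^ (2 * i + 1) ≤ n := by
          have := (div_le_one hn).mp h; linarith
        have h3 : a (i+1) ≤ a i / r := by simpa using hrec'
        have h4 : a (i+1) * r ^ (2 * (i+1)) ≤ (a i / r) * r ^ (2 * (i+1)) :=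
          mul_le_mul_of_nonneg_right h3 (pow_pos hr0 _).le
        calc a (i+1) * r ^ (2 * (i+1)) ≤ (a i / r) * r ^ (2 * (i+1)) := h4
          _ = a i * r ^ (2 * i + 1) := by
              field_simp
              ring
          _ ≤ n := h2
      · rw [max_eq_left h.le] at hrec'
        have hq : 0 < a i * r ^ (2 * i + 1) / n := lt_trans one_pos h
        have hai : 0 < a i := by
          by_contra hc
          push_neg at hc
          have : a i * r ^ (2 * i + 1) / n ≤ 0 := by
            apply div_nonpos_of_nonpos_of_nonneg _ hn.le
            exact mul_nonpos_of_nonpos_of_nonneg hc hpow.le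
          linarith
        have h5 : a i / (r * (a i * r ^ (2 * i + 1) / n)) = n / (r * r ^ (2 * i + 1)) := by
          field_simp
        rw [h5] at hrec'
        have h6 : a (i+1) * r ^ (2 * (i+1)) ≤ (n / (r * r ^ (2 * i + 1))) * r ^ (2 * (i+1)) :=
          mul_le_mul_of_nonneg_right hrec' (pow_pos hr0 _).le
        calc a (i+1) * r ^ (2 * (i+1)) ≤ (n / (r * r ^ (2 * i + 1))) * r ^ (2 * (i+1)) := h6
          _ = n := by
              have : r * r ^ (2 * i + 1) = r ^ (2 * (i+1)) := by ring
              rw [this]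
              field_simp
  intro i
  apply max_le _ hr
  rw [div_le_iff₀ hn]
  have := key i
  have hpow : (0:ℝ) < r ^ (2 * i) := pow_pos hr0 _
  have : a i * r ^ (2 * i + 1) = (a i * r ^ (2 * i)) * r := by ring
  rw [this]
  nlinarith [key i]
end
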